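/- Let A, B ∈ B(H) and let α ≥ 0, β > 0. Then ‖AB‖_{α,β} ≤ √( min{ 4/β, (α+β)/β², 16/(α+β) } ) · ‖A‖_{α,β} · ‖B‖_{α,β}. -/

import Mathlib

open ContinuousLinearMap

set_option maxHeartbeats 1000000
set_option linter.unusedSectionVars false

variable {H : Type*} [NormedAddCommGroup H] [InnerProductSpace ℂ H] [CompleteSpace H]

/-- The numerical radius `w(T) = sup {|⟨Tx,x⟩| : ‖x‖ = 1}`. -/
noncomputable def numRad (T : H →L[ℂ] H) : ℝ :=
  sSup {r : ℝ | ∃ x : H, ‖x‖ = 1 ∧ r = ‖(inner ℂ (T x) x : ℂ)‖}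

/-- The `(α,β)`-norm `‖T‖_{α,β} = sup {√(α|⟨Tx,x⟩|² + β‖Tx‖²) : ‖x‖ = 1}`. -/
noncomputable def abNorm (α β : ℝ) (T : H →L[ℂ] H) : ℝ :=
  sSup {r : ℝ | ∃ x : H, ‖x‖ = 1 ∧
    r = Real.sqrt (α * ‖(inner ℂ (T x) x : ℂ)‖ ^ 2 + β * ‖T x‖ ^ 2)}

local notation "⟪" x ", " y "⟫" => (inner ℂ x y : ℂ)

lemma numRad_nonneg (T : H →L[ℂ] H) : 0 ≤ numRad T :=
  Real.sSup_nonneg (by rintro r ⟨x, hx, rfl⟩; positivity)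

lemma numRad_bdd (T : H →L[ℂ] H) :
    BddAbove {r : ℝ | ∃ x : H, ‖x‖ = 1 ∧ r = ‖(inner ℂ (T x) x : ℂ)‖} := by
  refine ⟨‖T‖, ?_⟩
  rintro r ⟨x, hx, rfl⟩
  calc ‖⟪T x, x⟫‖ ≤ ‖T x‖ * ‖x‖ := norm_inner_le_norm _ _
    _ ≤ ‖T‖ * ‖x‖ * ‖x‖ := by
        have := T.le_opNorm x; nlinarith [norm_nonneg x]
    _ = ‖T‖ := by rw [hx]; ring

lemma numRad_pointwise (T : H →L[ℂ] H) {x : H} (hx : ‖x‖ = 1) :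
    ‖(inner ℂ (T x) x : ℂ)‖ ≤ numRad T :=
  le_csSup (numRad_bdd T) ⟨x, hx, rfl⟩

lemma inner_le_numRad (T : H →L[ℂ] H) (x : H) :
    ‖(inner ℂ (T x) x : ℂ)‖ ≤ numRad T * ‖x‖ ^ 2 := by
  rcases eq_or_ne x 0 with rfl | hx0
  · simp
  · have hn : (0:ℝ) < ‖x‖ := norm_pos_iff.mpr hx0
    set c : ℂ := (‖x‖ : ℂ)⁻¹ with hcdef
    have hu : ‖c • x‖ = 1 := by
      rw [norm_smul]
      simp [hcdef, norm_inv, hn.ne']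
    have key := numRad_pointwise T hu
    have hTc : T (c • x) = c • T x := by simp
    rw [hTc, inner_smul_left, inner_smul_right, norm_mul, norm_mul] at key
    have hc : ‖c‖ = ‖x‖⁻¹ := by simp [hcdef]
    have hcs : ‖(starRingEnd ℂ) c‖ = ‖x‖⁻¹ := by
      rw [RCLike.norm_conj]; exact hc
    rw [hc, hcs] at key
    have h1 : ‖⟪T x, x⟫‖ * (‖x‖⁻¹ * ‖x‖⁻¹) ≤ numRad T := by
      calc ‖⟪T x, x⟫‖ * (‖x‖⁻¹ * ‖x‖⁻¹) = ‖x‖⁻¹ * (‖x‖⁻¹ * ‖⟪T x, x⟫‖) := by ring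
        _ ≤ numRad T := key
    have h2 : ‖x‖⁻¹ * ‖x‖⁻¹ * ‖x‖ ^ 2 = 1 := by
      rw [pow_two]; field_simp
    calc ‖⟪T x, x⟫‖ = ‖⟪T x, x⟫‖ * (‖x‖⁻¹ * ‖x‖⁻¹ * ‖x‖ ^ 2) := by rw [h2, mul_one]
      _ = ‖⟪T x, x⟫‖ * (‖x‖⁻¹ * ‖x‖⁻¹) * ‖x‖ ^ 2 := by ring
      _ ≤ numRad T * ‖x‖ ^ 2 :=
          mul_le_mul_of_nonneg_right h1 (by positivity)

lemma opNorm_le_two_numRad (T : H →L[ℂ] H) : ‖T‖ ≤ 2 * numRad T := by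
  set W := numRad T with hWdef
  have hW0 : 0 ≤ W := numRad_nonneg T
  have hW : ∀ x : H, ‖⟪T x, x⟫‖ ≤ W * ‖x‖ ^ 2 := inner_le_numRad T
  have hsum : ∀ x y : H, ‖⟪T x, y⟫ + ⟪T y, x⟫‖ ≤ W * (‖x‖ ^ 2 + ‖y‖ ^ 2) := by
    intro x y
    have hid : ⟪T (x + y), x + y⟫ - ⟪T (x - y), x - y⟫ = 2 * (⟪T x, y⟫ + ⟪T y, x⟫) := by
      simp only [map_add, map_sub, inner_add_left, inner_add_right, inner_sub_left,
        inner_sub_right]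
      ring
    have h1 := hW (x + y)
    have h2 := hW (x - y)
    have hpar := parallelogram_law_with_norm ℂ x y
    have hbig : ‖(2 : ℂ) * (⟪T x, y⟫ + ⟪T y, x⟫)‖ ≤ W * (‖x + y‖ ^ 2 + ‖x - y‖ ^ 2) := by
      rw [← hid]
      calc ‖⟪T (x + y), x + y⟫ - ⟪T (x - y), x - y⟫‖
          ≤ ‖⟪T (x + y), x + y⟫‖ + ‖⟪T (x - y), x - y⟫‖ := norm_sub_le _ _
        _ ≤ W * (‖x + y‖ ^ 2 + ‖x - y‖ ^ 2) := by nlinarith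
    rw [norm_mul] at hbig
    have h2n : ‖(2:ℂ)‖ = 2 := by norm_num
    rw [h2n] at hbig
    nlinarith [norm_nonneg (⟪T x, y⟫ + ⟪T y, x⟫)]
  have hdiff : ∀ x y : H, ‖⟪T x, y⟫ - ⟪T y, x⟫‖ ≤ W * (‖x‖ ^ 2 + ‖y‖ ^ 2) := by
    intro x y
    have h := hsum x (Complex.I • y)
    have h1 : ⟪T x, Complex.I • y⟫ = Complex.I * ⟪T x, y⟫ := inner_smul_right _ _ _
    have h2 : ⟪T (Complex.I • y), x⟫ = -Complex.I * ⟪T y, x⟫ := by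
      rw [map_smul, inner_smul_left]
      simp [Complex.conj_I]
    rw [h1, h2] at h
    have hid : Complex.I * ⟪T x, y⟫ + -Complex.I * ⟪T y, x⟫
        = Complex.I * (⟪T x, y⟫ - ⟪T y, x⟫) := by ring
    rw [hid, norm_mul, Complex.norm_I, one_mul] at h
    have hny : ‖Complex.I • y‖ = ‖y‖ := by
      rw [norm_smul, Complex.norm_I, one_mul]
    rwa [hny] at h
  have hxy : ∀ x y : H, ‖⟪T x, y⟫‖ ≤ W * (‖x‖ ^ 2 + ‖y‖ ^ 2) := by
    intro x y
    have hid : (2 : ℂ) * ⟪T x, y⟫ = (⟪T x, y⟫ + ⟪T y, x⟫) + (⟪T x, y⟫ - ⟪T y, x⟫) := by ring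
    have h := norm_add_le (⟪T x, y⟫ + ⟪T y, x⟫) (⟪T x, y⟫ - ⟪T y, x⟫)
    rw [← hid, norm_mul] at h
    have h2n : ‖(2:ℂ)‖ = 2 := by norm_num
    rw [h2n] at h
    nlinarith [hsum x y, hdiff x y]
  refine opNorm_le_bound T (by positivity) ?_
  intro x
  rcases eq_or_ne (T x) 0 with h0 | h0
  · rw [h0, norm_zero]; positivity
  · have hx0 : x ≠ 0 := by rintro rfl; simp at h0
    have hTn : (0:ℝ) < ‖T x‖ := norm_pos_iff.mpr h0
    have hxn : (0:ℝ) < ‖x‖ := norm_pos_iff.mpr hx0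
    set y : H := ((‖x‖ / ‖T x‖ : ℝ) : ℂ) • T x with hy
    have hyx : ‖y‖ = ‖x‖ := by
      rw [hy, norm_smul, Complex.norm_real, Real.norm_eq_abs,
        abs_of_nonneg (by positivity)]
      field_simp
    have hTxC : ((‖T x‖ : ℝ) : ℂ) ≠ 0 := by
      exact_mod_cast hTn.ne'
    have hin : ⟪T x, y⟫ = ((‖x‖ * ‖T x‖ : ℝ) : ℂ) := by
      rw [hy, inner_smul_right, inner_self_eq_norm_sq_to_K]
      push_cast
      field_simp
      simp
    have h := hxy x y
    rw [hin, hyx] at h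
    have hnr : ‖((‖x‖ * ‖T x‖ : ℝ) : ℂ)‖ = ‖x‖ * ‖T x‖ := by
      rw [Complex.norm_real, Real.norm_eq_abs, abs_of_nonneg (by positivity)]
    rw [hnr] at h
    nlinarith

lemma abNorm_nonneg (α β : ℝ) (T : H →L[ℂ] H) : 0 ≤ abNorm α β T :=
  Real.sSup_nonneg (by rintro r ⟨x, hx, rfl⟩; positivity)

lemma abNorm_bdd (α β : ℝ) (hα : 0 ≤ α) (hβ : 0 ≤ β) (T : H →L[ℂ] H) :
    BddAbove {r : ℝ | ∃ x : H, ‖x‖ = 1 ∧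
      r = Real.sqrt (α * ‖(inner ℂ (T x) x : ℂ)‖ ^ 2 + β * ‖T x‖ ^ 2)} := by
  refine ⟨Real.sqrt ((α + β) * ‖T‖ ^ 2), ?_⟩
  rintro r ⟨x, hx, rfl⟩
  apply Real.sqrt_le_sqrt
  have h1 : ‖⟪T x, x⟫‖ ≤ ‖T x‖ := by
    have := norm_inner_le_norm (𝕜 := ℂ) (T x) x; rw [hx] at this; simpa using this
  have h2 : ‖T x‖ ≤ ‖T‖ := by
    have := T.le_opNorm x; rw [hx] at this; simpa using this
  have e1 : ‖⟪T x, x⟫‖ ^ 2 ≤ ‖T‖ ^ 2 :=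
    pow_le_pow_left₀ (norm_nonneg _) (h1.trans h2) 2
  have e2 : ‖T x‖ ^ 2 ≤ ‖T‖ ^ 2 := pow_le_pow_left₀ (norm_nonneg _) h2 2
  nlinarith

lemma ab_pointwise (α β : ℝ) (hα : 0 ≤ α) (hβ : 0 ≤ β) (T : H →L[ℂ] H) {x : H}
    (hx : ‖x‖ = 1) :
    Real.sqrt (α * ‖(inner ℂ (T x) x : ℂ)‖ ^ 2 + β * ‖T x‖ ^ 2) ≤ abNorm α β T :=
  le_csSup (abNorm_bdd α β hα hβ T) ⟨x, hx, rfl⟩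

lemma sqrt_beta_opNorm_le (α β : ℝ) (hα : 0 ≤ α) (hβ : 0 < β) (T : H →L[ℂ] H) :
    Real.sqrt β * ‖T‖ ≤ abNorm α β T := by
  have hsb : (0:ℝ) < Real.sqrt β := Real.sqrt_pos.mpr hβ
  have hbound : ‖T‖ ≤ abNorm α β T / Real.sqrt β := by
    refine opNorm_le_bound' T
      (div_nonneg (abNorm_nonneg α β T) (Real.sqrt_nonneg β)) ?_
    intro x hx
    have hxn : (0:ℝ) < ‖x‖ := lt_of_le_of_ne (norm_nonneg x) (Ne.symm hx)
    set u : H := ((‖x‖ : ℂ))⁻¹ • x with hu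
    have hun : ‖u‖ = 1 := by
      rw [hu, norm_smul]; simp [hxn.ne']
    have hTu : ‖T u‖ = ‖T x‖ / ‖x‖ := by
      rw [hu, map_smul, norm_smul]
      simp [hxn.ne', div_eq_inv_mul]
    have key := ab_pointwise α β hα hβ.le T hun
    have h1 : Real.sqrt β * ‖T u‖ ≤ abNorm α β T := by
      calc Real.sqrt β * ‖T u‖ = Real.sqrt (β * ‖T u‖ ^ 2) := by
            rw [Real.sqrt_mul hβ.le, Real.sqrt_sq (norm_nonneg _)]
        _ ≤ Real.sqrt (α * ‖⟪T u, u⟫‖ ^ 2 + β * ‖T u‖ ^ 2) := by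
            apply Real.sqrt_le_sqrt; nlinarith [norm_nonneg (⟪T u, u⟫)]
        _ ≤ abNorm α β T := key
    have h2 : ‖T u‖ ≤ abNorm α β T / Real.sqrt β := by
      rw [le_div_iff₀ hsb]; linarith [h1]
    rw [hTu] at h2
    calc ‖T x‖ = ‖T x‖ / ‖x‖ * ‖x‖ := by field_simp
      _ ≤ abNorm α β T / Real.sqrt β * ‖x‖ :=
          mul_le_mul_of_nonneg_right h2 (norm_nonneg x)
  calc Real.sqrt β * ‖T‖ ≤ Real.sqrt β * (abNorm α β T / Real.sqrt β) :=
        mul_le_mul_of_nonneg_left hbound hsb.le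
    _ = abNorm α β T := by field_simp

lemma sqrt_sum_numRad_le (α β : ℝ) (hα : 0 ≤ α) (hβ : 0 < β) (T : H →L[ℂ] H) :
    Real.sqrt (α + β) * numRad T ≤ abNorm α β T := by
  have hab : (0:ℝ) < α + β := by linarith
  have hs : (0:ℝ) < Real.sqrt (α + β) := Real.sqrt_pos.mpr hab
  have hbound : numRad T ≤ abNorm α β T / Real.sqrt (α + β) := by
    apply Real.sSup_le
    · rintro r ⟨x, hx, rfl⟩
      have h1 : ‖⟪T x, x⟫‖ ≤ ‖T x‖ := by
        have := norm_inner_le_norm (𝕜 := ℂ) (T x) x; rw [hx] at this; simpa using this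
      have key := ab_pointwise α β hα hβ.le T hx
      have h2 : Real.sqrt (α + β) * ‖⟪T x, x⟫‖ ≤ abNorm α β T := by
        calc Real.sqrt (α + β) * ‖⟪T x, x⟫‖
            = Real.sqrt ((α + β) * ‖⟪T x, x⟫‖ ^ 2) := by
              rw [Real.sqrt_mul hab.le, Real.sqrt_sq (norm_nonneg _)]
          _ ≤ Real.sqrt (α * ‖⟪T x, x⟫‖ ^ 2 + β * ‖T x‖ ^ 2) := by
              apply Real.sqrt_le_sqrt
              nlinarith [norm_nonneg (⟪T x, x⟫), pow_le_pow_left₀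
                (norm_nonneg (⟪T x, x⟫)) h1 2]
          _ ≤ abNorm α β T := key
      rw [le_div_iff₀ hs]; linarith [h2]
    · exact div_nonneg (abNorm_nonneg α β T) (Real.sqrt_nonneg _)
  calc Real.sqrt (α + β) * numRad T
      ≤ Real.sqrt (α + β) * (abNorm α β T / Real.sqrt (α + β)) :=
        mul_le_mul_of_nonneg_left hbound hs.le
    _ = abNorm α β T := by field_simp

/-- Bound for the `(α,β)`-norm of a product. -/
theorem abNorm_mul_le (A B : H →L[ℂ] H) (α β : ℝ) (hα : 0 ≤ α) (hβ : 0 < β) :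
    abNorm α β (A * B) ≤
      Real.sqrt (min (min (4 / β) ((α + β) / β ^ 2)) (16 / (α + β))) *
        abNorm α β A * abNorm α β B := by
  have hab : (0:ℝ) < α + β := by linarith
  set a := abNorm α β A with ha
  set b := abNorm α β B with hb
  have ha0 : 0 ≤ a := abNorm_nonneg α β A
  have hb0 : 0 ≤ b := abNorm_nonneg α β B
  set C : ℝ := min (min (4 / β) ((α + β) / β ^ 2)) (16 / (α + β)) with hC
  have hC0 : 0 ≤ C :=
    le_min (le_min (div_nonneg (by norm_num) hβ.le)
      (div_nonneg hab.le (by positivity))) (div_nonneg (by norm_num) hab.le)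
  set p := ‖A‖ with hp
  set q := ‖B‖ with hq
  have hp0 : 0 ≤ p := norm_nonneg A
  have hq0 : 0 ≤ q := norm_nonneg B
  have hAβ : β * p ^ 2 ≤ a ^ 2 := by
    have h := sqrt_beta_opNorm_le α β hα hβ A
    have h2 : Real.sqrt β * p * (Real.sqrt β * p) ≤ a * a :=
      mul_self_le_mul_self (by positivity) h
    calc β * p ^ 2 = Real.sqrt β * p * (Real.sqrt β * p) := by
          linear_combination (-(p ^ 2)) * Real.sq_sqrt hβ.le
      _ ≤ a * a := h2
      _ = a ^ 2 := (sq a).symm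
  have hBβ : β * q ^ 2 ≤ b ^ 2 := by
    have h := sqrt_beta_opNorm_le α β hα hβ B
    have h2 : Real.sqrt β * q * (Real.sqrt β * q) ≤ b * b :=
      mul_self_le_mul_self (by positivity) h
    calc β * q ^ 2 = Real.sqrt β * q * (Real.sqrt β * q) := by
          linear_combination (-(q ^ 2)) * Real.sq_sqrt hβ.le
      _ ≤ b * b := h2
      _ = b ^ 2 := (sq b).symm
  have hA4 : (α + β) * p ^ 2 ≤ 4 * a ^ 2 := by
    have h1 := opNorm_le_two_numRad A
    have h2 := sqrt_sum_numRad_le α β hα hβ A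
    have h3 : Real.sqrt (α + β) * p ≤ 2 * a := by
      calc Real.sqrt (α + β) * p ≤ Real.sqrt (α + β) * (2 * numRad A) :=
            mul_le_mul_of_nonneg_left h1 (Real.sqrt_nonneg _)
        _ = 2 * (Real.sqrt (α + β) * numRad A) := by ring
        _ ≤ 2 * a := by linarith
    have h4 : Real.sqrt (α + β) * p * (Real.sqrt (α + β) * p) ≤ 2 * a * (2 * a) :=
      mul_self_le_mul_self (by positivity) h3
    calc (α + β) * p ^ 2 = Real.sqrt (α + β) * p * (Real.sqrt (α + β) * p) := by
          linear_combination (-(p ^ 2)) * Real.sq_sqrt hab.le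
      _ ≤ 2 * a * (2 * a) := h4
      _ = 4 * a ^ 2 := by ring
  have hB4 : (α + β) * q ^ 2 ≤ 4 * b ^ 2 := by
    have h1 := opNorm_le_two_numRad B
    have h2 := sqrt_sum_numRad_le α β hα hβ B
    have h3 : Real.sqrt (α + β) * q ≤ 2 * b := by
      calc Real.sqrt (α + β) * q ≤ Real.sqrt (α + β) * (2 * numRad B) :=
            mul_le_mul_of_nonneg_left h1 (Real.sqrt_nonneg _)
        _ = 2 * (Real.sqrt (α + β) * numRad B) := by ring
        _ ≤ 2 * b := by linarith
    have h4 : Real.sqrt (α + β) * q * (Real.sqrt (α + β) * q) ≤ 2 * b * (2 * b) :=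
      mul_self_le_mul_self (by positivity) h3
    calc (α + β) * q ^ 2 = Real.sqrt (α + β) * q * (Real.sqrt (α + β) * q) := by
          linear_combination (-(q ^ 2)) * Real.sq_sqrt hab.le
      _ ≤ 2 * b * (2 * b) := h4
      _ = 4 * b ^ 2 := by ring
  have hmain : (α + β) * (p ^ 2 * q ^ 2) ≤ C * (a ^ 2 * b ^ 2) := by
    have hK : (0:ℝ) ≤ a ^ 2 * b ^ 2 := by positivity
    have hCeq : C * (a ^ 2 * b ^ 2)
        = min (min (4 / β * (a ^ 2 * b ^ 2)) ((α + β) / β ^ 2 * (a ^ 2 * b ^ 2)))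
            (16 / (α + β) * (a ^ 2 * b ^ 2)) := by
      rw [hC, min_mul_of_nonneg _ _ hK, min_mul_of_nonneg _ _ hK]
    rw [hCeq]
    refine le_min (le_min ?_ ?_) ?_
    · rw [div_mul_eq_mul_div, le_div_iff₀ hβ]
      nlinarith [mul_le_mul hA4 hBβ (by positivity) (by positivity)]
    · rw [div_mul_eq_mul_div, le_div_iff₀ (by positivity : (0:ℝ) < β ^ 2)]
      nlinarith [mul_le_mul hAβ hBβ (by positivity) (by positivity)]
    · rw [div_mul_eq_mul_div, le_div_iff₀ hab]
      nlinarith [mul_le_mul hA4 hB4 (by positivity) (by positivity)]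
  apply Real.sSup_le
  · rintro r ⟨x, hx, rfl⟩
    have h1 : ‖⟪(A * B) x, x⟫‖ ≤ ‖(A * B) x‖ := by
      have := norm_inner_le_norm (𝕜 := ℂ) ((A * B) x) x; rw [hx] at this; simpa using this
    have h2 : ‖(A * B) x‖ ≤ p * q := by
      calc ‖(A * B) x‖ ≤ ‖A * B‖ * ‖x‖ := (A * B).le_opNorm x
        _ = ‖A * B‖ := by rw [hx, mul_one]
        _ ≤ p * q := opNorm_comp_le A B
    have hX : α * ‖⟪(A * B) x, x⟫‖ ^ 2 + β * ‖(A * B) x‖ ^ 2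
        ≤ C * (a ^ 2 * b ^ 2) := by
      have h3 : α * ‖⟪(A * B) x, x⟫‖ ^ 2 + β * ‖(A * B) x‖ ^ 2
          ≤ (α + β) * (p ^ 2 * q ^ 2) := by
        have e1 : ‖⟪(A * B) x, x⟫‖ ^ 2 ≤ (p * q) ^ 2 :=
          pow_le_pow_left₀ (norm_nonneg _) (h1.trans h2) 2
        have e2 : ‖(A * B) x‖ ^ 2 ≤ (p * q) ^ 2 :=
          pow_le_pow_left₀ (norm_nonneg _) h2 2
        nlinarith
      linarith
    calc Real.sqrt (α * ‖⟪(A * B) x, x⟫‖ ^ 2 + β * ‖(A * B) x‖ ^ 2)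
        ≤ Real.sqrt (C * (a ^ 2 * b ^ 2)) := Real.sqrt_le_sqrt hX
      _ = Real.sqrt C * a * b := by
          rw [Real.sqrt_mul hC0, Real.sqrt_mul (by positivity : (0:ℝ) ≤ a ^ 2),
            Real.sqrt_sq ha0, Real.sqrt_sq hb0]
          ring
  · exact mul_nonneg (mul_nonneg (Real.sqrt_nonneg C) ha0) hb0
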